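/- Let p be a prime, λ ∈ (Z/pZ)^*, and let r₀, s₀ be positive integers with r₀ ≡ λ s₀ (mod p) and r₀·s₀ = ρ(λ,p). If r, s are positive integers with r ≡ λ s (mod p) and all of r, s, r₀, s₀ are less than √p, then there exists a positive integer δ with r = δ·r₀ and s = δ·s₀. -/
import Mathlib


open scoped Classical

noncomputable section

/-- `ρ(λ,p) = min { r·s : r, s positive integers with r ≡ λ·s (mod p) }`. -/
def rho (p : ℕ) (lam : (ZMod p)ˣ) : ℕ :=
  sInf {n : ℕ | ∃ r s : ℕ, 0 < r ∧ 0 < s ∧ (r : ZMod p) = (lam : ZMod p) * s ∧ n = r * s}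

/-- Lemma (structure of small solutions of `r ≡ λ s (mod p)`): if `(r₀, s₀)` attains
`ρ(λ,p)` and `(r,s)` is another positive solution with all of `r, s, r₀, s₀ < √p`, then
`(r,s) = (δ r₀, δ s₀)` for some positive integer `δ`. -/
theorem small_solutions_proportional (p : ℕ) (hp : p.Prime) (lam : (ZMod p)ˣ)
    (r₀ s₀ r s : ℕ) (hr₀ : 0 < r₀) (hs₀ : 0 < s₀)
    (hcong₀ : (r₀ : ZMod p) = (lam : ZMod p) * s₀) (hmin : r₀ * s₀ = rho p lam)
    (hr : 0 < r) (hs : 0 < s) (hcong : (r : ZMod p) = (lam : ZMod p) * s)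
    (hr2 : (r : ℝ) < Real.sqrt p) (hs2 : (s : ℝ) < Real.sqrt p)
    (hr₀2 : (r₀ : ℝ) < Real.sqrt p) (hs₀2 : (s₀ : ℝ) < Real.sqrt p) :
    ∃ δ : ℕ, 0 < δ ∧ r = δ * r₀ ∧ s = δ * s₀ := by
  haveI := Fact.mk hp
  have hp0 : 0 < p := hp.pos
  have hp1 : (1:ℝ) ≤ (p:ℝ) := by exact_mod_cast hp0
  have hple : Real.sqrt p ≤ p := by
    have h := Real.sqrt_le_sqrt (by nlinarith : (p:ℝ) ≤ (p:ℝ)^2)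
    rwa [Real.sqrt_sq (by positivity)] at h
  have hr0p : r₀ < p := by exact_mod_cast lt_of_lt_of_le hr₀2 hple
  have key : ∀ a b : ℕ, (a:ℝ) < Real.sqrt p → (b:ℝ) < Real.sqrt p → a * b < p := by
    intro a b ha hb
    have h : (a:ℝ) * b < Real.sqrt p * Real.sqrt p :=
      mul_lt_mul'' ha hb (Nat.cast_nonneg a) (Nat.cast_nonneg b)
    rw [Real.mul_self_sqrt (by positivity)] at h
    exact_mod_cast h
  have h1 : r * s₀ < p := key _ _ hr2 hs₀2
  have h2 : r₀ * s < p := key _ _ hr₀2 hs2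
  have hz : ((r * s₀ : ℕ) : ZMod p) = ((r₀ * s : ℕ) : ZMod p) := by
    push_cast
    rw [hcong, hcong₀]; ring
  have heq : r * s₀ = r₀ * s := by
    have hmod := (ZMod.natCast_eq_natCast_iff _ _ _).mp hz
    rwa [Nat.ModEq, Nat.mod_eq_of_lt h1, Nat.mod_eq_of_lt h2] at hmod
  have hg : Nat.Coprime r₀ s₀ := by
    by_contra hne
    set g := Nat.gcd r₀ s₀ with hgdef
    have hg0 : 0 < g := Nat.gcd_pos_of_pos_left _ hr₀
    have hg2 : 2 ≤ g := by
      rcases Nat.lt_or_ge g 2 with h | h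
      · exact absurd (by omega : g = 1) hne
      · exact h
    have hdr : g ∣ r₀ := Nat.gcd_dvd_left _ _
    have hds : g ∣ s₀ := Nat.gcd_dvd_right _ _
    have hgp : g < p := lt_of_le_of_lt (Nat.le_of_dvd hr₀ hdr) hr0p
    have hgz : (g : ZMod p) ≠ 0 := by
      rw [Ne, ZMod.natCast_eq_zero_iff]
      exact fun h => absurd (Nat.le_of_dvd hg0 h) (by omega)
    have hcong' : ((r₀ / g : ℕ) : ZMod p) = (lam : ZMod p) * ((s₀ / g : ℕ)) := by
      apply mul_left_cancel₀ hgz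
      have e1 : ((g * (r₀ / g) : ℕ) : ZMod p) = ((r₀ : ℕ) : ZMod p) := by
        rw [Nat.mul_div_cancel' hdr]
      have e2 : ((g * (s₀ / g) : ℕ) : ZMod p) = ((s₀ : ℕ) : ZMod p) := by
        rw [Nat.mul_div_cancel' hds]
      push_cast at e1 e2
      rw [e1, hcong₀, ← e2]; ring
    have hmem : (r₀ / g) * (s₀ / g) ∈
        {n : ℕ | ∃ a b : ℕ, 0 < a ∧ 0 < b ∧ (a : ZMod p) = (lam : ZMod p) * b ∧ n = a * b} :=
      ⟨r₀ / g, s₀ / g, Nat.div_pos (Nat.le_of_dvd hr₀ hdr) hg0,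
        Nat.div_pos (Nat.le_of_dvd hs₀ hds) hg0, hcong', rfl⟩
    have hle : rho p lam ≤ (r₀ / g) * (s₀ / g) := Nat.sInf_le hmem
    have hlt : (r₀ / g) * (s₀ / g) < r₀ * s₀ := by
      calc (r₀ / g) * (s₀ / g) ≤ (r₀ / g) * s₀ :=
            Nat.mul_le_mul_left _ (Nat.div_le_self _ _)
        _ < r₀ * s₀ := (Nat.mul_lt_mul_right hs₀).mpr (Nat.div_lt_self hr₀ hg2)
    omega
  have hdvd : r₀ ∣ r := hg.dvd_of_dvd_mul_right ⟨s, heq⟩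
  refine ⟨r / r₀, Nat.div_pos (Nat.le_of_dvd hr hdvd) hr₀, (Nat.div_mul_cancel hdvd).symm, ?_⟩
  have := heq
  rcases hdvd with ⟨d, rfl⟩
  rw [Nat.mul_div_cancel_left _ hr₀]
  nlinarith [this]
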